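/- arXiv:0903.3455 — 5 statements merged into one kernel-verified Lean document; each statement's English description precedes it below -/
import Mathlib

section
/- Let G be a group, φ an automorphism of G, and C a central subgroup of G. The map sending a coset c·L(C, φ) to the φ-twisted conjugacy class of c is a well-defined bijection between the quotient set C / L(C, φ) and the set of φ-twisted conjugacy classes of elements of C (classes taken with respect to twisted conjugacy in G). In particular, the Reidemeister number R(φ) is at least the index [C : L(C, φ)]. -/
/-- Elements `a`, `b` are `φ`-twisted conjugate: `∃ x, φ x * a = b * x`,
equivalently `a = (φ x)⁻¹ * b * x`. -/
def TwistedConj {G : Type*} [Group G] (φ : G ≃* G) (a b : G) : Prop :=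
  ∃ x : G, φ x * a = b * x

/-- Twisted conjugacy as a setoid; its quotient's cardinality is the
Reidemeister number `R(φ)`. -/
def twistedSetoid {G : Type*} [Group G] (φ : G ≃* G) : Setoid G where
  r := TwistedConj φ
  iseqv := by
    constructor
    · intro a; exact ⟨1, by simp⟩
    · rintro a b ⟨x, hx⟩
      refine ⟨x⁻¹, ?_⟩
      rw [map_inv]
      have : b = φ x * a * x⁻¹ := by rw [hx]; group
      rw [this]; group
    · rintro a b c ⟨x, hx⟩ ⟨y, hy⟩
      refine ⟨y * x, ?_⟩
      rw [map_mul, mul_assoc, hx, ← mul_assoc, hy, mul_assoc]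

/-- the map `c • L(C,φ) ↦ [c]_φ` is a well-defined bijection from
`C ⧸ L(C, φ)` onto the set of `φ`-twisted conjugacy classes of elements of `C`;
in particular `R(φ) ≥ [C : L(C, φ)]`. -/
theorem stmt2 {G : Type*} [Group G] (φ : G ≃* G) (C : Subgroup G)
    (hC : C ≤ Subgroup.center G) (L : Subgroup C)
    (hL : ∀ c : C, c ∈ L ↔ ∃ x : G, φ x = (c : G) * x) :
    (∃ f : C ⧸ L → {q : Quotient (twistedSetoid φ) // ∃ c : C, Quotient.mk (twistedSetoid φ) (c : G) = q},
        Function.Bijective f ∧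
        ∀ c : C, (f (QuotientGroup.mk c) : Quotient (twistedSetoid φ))
          = Quotient.mk (twistedSetoid φ) (c : G)) ∧
    Cardinal.mk (C ⧸ L) ≤ Cardinal.mk (Quotient (twistedSetoid φ)) := by
  classical
  have key : ∀ c c' : C, TwistedConj φ (c : G) (c' : G) ↔ c⁻¹ * c' ∈ L := by
    intro c c'
    have hcomm : ∀ x : G, (c : G) * x = x * (c : G) := fun x =>
      ((Subgroup.mem_center_iff.mp (hC c.2)) x).symm
    have hc : ∀ x : G, Commute (c : G) x := fun x => hcomm x
    have hcomminv : ∀ x : G, (c : G)⁻¹ * x = x * (c : G)⁻¹ := fun x =>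
      ((hc x).inv_left).eq
    rw [hL]
    constructor
    · rintro ⟨x, hx⟩
      refine ⟨x, ?_⟩
      push_cast
      have hx' : φ x = (c' : G) * x * (c : G)⁻¹ := by
        rw [← hx]; group
      rw [hx']
      calc (c' : G) * x * (c : G)⁻¹ = (c' : G) * ((c : G)⁻¹ * x) := by
            rw [mul_assoc, hcomminv]
        _ = (c' : G) * (c : G)⁻¹ * x := by rw [mul_assoc]
        _ = (c : G)⁻¹ * (c' : G) * x := by rw [← hcomminv]
    · rintro ⟨x, hx⟩
      refine ⟨x, ?_⟩
      push_cast at hx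
      rw [hx, mul_assoc _ x (c : G), ← hcomm x, mul_assoc (c : G)⁻¹ (c' : G),
        ← mul_assoc (c' : G) (c : G) x, ← hcomm (c' : G),
        mul_assoc (c : G) (c' : G) x, ← mul_assoc, inv_mul_cancel, one_mul]
  let g : C → {q : Quotient (twistedSetoid φ) // ∃ c : C,
      Quotient.mk (twistedSetoid φ) (c : G) = q} :=
    fun c => ⟨Quotient.mk (twistedSetoid φ) (c : G), ⟨c, rfl⟩⟩
  have hwd : ∀ c c' : C, (QuotientGroup.leftRel L) c c' → g c = g c' := by
    intro c c' h
    have h' : c⁻¹ * c' ∈ L := (QuotientGroup.leftRel_apply).mp h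
    exact Subtype.ext (Quotient.sound ((key c c').mpr h'))
  let f : C ⧸ L → {q : Quotient (twistedSetoid φ) // ∃ c : C,
      Quotient.mk (twistedSetoid φ) (c : G) = q} := Quotient.lift g hwd
  have hbij : Function.Bijective f := by
    constructor
    · intro a b
      induction a using QuotientGroup.induction_on
      induction b using QuotientGroup.induction_on
      rename_i c c'
      intro h
      have h2 : TwistedConj φ (c : G) (c' : G) :=
        Quotient.exact (congrArg Subtype.val h)
      exact (QuotientGroup.eq).mpr ((key c c').mp h2)
    · rintro ⟨q, c, hc⟩
      exact ⟨QuotientGroup.mk c, Subtype.ext hc⟩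
  refine ⟨⟨f, hbij, fun c => rfl⟩, ?_⟩
  calc Cardinal.mk (C ⧸ L)
      = Cardinal.mk {q : Quotient (twistedSetoid φ) // ∃ c : C,
          Quotient.mk (twistedSetoid φ) (c : G) = q} :=
        Cardinal.mk_congr (Equiv.ofBijective f hbij)
    _ ≤ Cardinal.mk (Quotient (twistedSetoid φ)) := Cardinal.mk_subtype_le _
end

section
/- Let G be a group, φ an automorphism of G, C a central φ-invariant subgroup, η : G → G/C the quotient map, and φ̄ the induced automorphism of G/C. If g ∈ G and c ∈ C with c = cᵢ·c' where c' ∈ L(C, φ_g) (here φ_g = φ composed with conjugation by g), then g·c is φ-twisted conjugate to g·cᵢ in G. -/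
/-- with `C` central and `φ`-invariant, if `c = cᵢ * c'` with
`c' ∈ L(C, φ_g)` (`φ_g : x ↦ g⁻¹ * φ x * g`), then `g * c ∼_φ g * cᵢ`. -/
theorem stmt6 {G : Type*} [Group G] (φ : G ≃* G) (C : Subgroup G)
    (hC : C ≤ Subgroup.center G) (hinv : ∀ c ∈ C, φ c ∈ C)
    (g ci c' : G) (hci : ci ∈ C) (hc' : c' ∈ C)
    (hL : ∃ x : G, g⁻¹ * φ x * g = c' * x) :
    TwistedConj φ (g * (ci * c')) (g * ci) := by
  obtain ⟨x, hx⟩ := hL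
  have hφx : φ x = g * (c' * x) * g⁻¹ := by
    rw [← hx]; group
  have hcomm_ci : ∀ y : G, ci * y = y * ci := fun y =>
    ((Subgroup.mem_center_iff.mp (hC hci)) y).symm
  have hcomm_c' : ∀ y : G, c' * y = y * c' := fun y =>
    ((Subgroup.mem_center_iff.mp (hC hc')) y).symm
  refine ⟨x⁻¹, ?_⟩
  rw [map_inv, hφx]
  have h1 : x⁻¹ * ci = ci * x⁻¹ := (hcomm_ci x⁻¹).symm
  have h2 : c'⁻¹ * ci = ci * c'⁻¹ := by
    have := hcomm_ci c'⁻¹; rw [this]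
  calc (g * (c' * x) * g⁻¹)⁻¹ * (g * (ci * c'))
      = g * (x⁻¹ * (c'⁻¹ * (ci * c'))) := by group
    _ = g * (x⁻¹ * ci) := by rw [← mul_assoc c'⁻¹, h2, mul_assoc, inv_mul_cancel, mul_one]
    _ = g * ci * x⁻¹ := by rw [h1]; group
end

section
/- Let G be a group, φ an automorphism, C a central φ-invariant subgroup, and g ∈ G. If c₁, c₂ ∈ C and g·c₁ is φ-twisted conjugate to g·c₂ in G, then c₁⁻¹·c₂ ∈ L(C, φ_g), where φ_g(x) = g⁻¹·φ(x)·g. -/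
/-- with `C` central and `φ`-invariant, if `g * c₁ ∼_φ g * c₂`
for `c₁, c₂ ∈ C`, then `c₁⁻¹ * c₂ ∈ L(C, φ_g)` where `φ_g x = g⁻¹ * φ x * g`. -/
theorem stmt7 {G : Type*} [Group G] (φ : G ≃* G) (C : Subgroup G)
    (hC : C ≤ Subgroup.center G) (hinv : ∀ c ∈ C, φ c ∈ C)
    (g c₁ c₂ : G) (h1 : c₁ ∈ C) (h2 : c₂ ∈ C)
    (h : TwistedConj φ (g * c₁) (g * c₂)) :
    c₁⁻¹ * c₂ ∈ C ∧ ∃ x : G, g⁻¹ * φ x * g = (c₁⁻¹ * c₂) * x := by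
  refine ⟨mul_mem (inv_mem h1) h2, ?_⟩
  obtain ⟨x, hx⟩ := h
  refine ⟨x, ?_⟩
  have hc2 := (Subgroup.mem_center_iff.mp (hC h2))
  have hc1i := (Subgroup.mem_center_iff.mp (hC (inv_mem h1)))
  have key : φ x * g = g * c₂ * x * c₁⁻¹ := by
    have h' : φ x * g * c₁ = g * c₂ * x := by rw [← mul_assoc] at hx; exact hx
    rw [← h']; group
  rw [mul_assoc, key]
  calc g⁻¹ * (g * c₂ * x * c₁⁻¹)
      = c₂ * (x * c₁⁻¹) := by group
    _ = c₂ * (c₁⁻¹ * x) := by rw [hc1i x]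
    _ = c₁⁻¹ * c₂ * x := by rw [← mul_assoc, ← hc2 c₁⁻¹]
end

section
/- Let G be a group, φ an automorphism, C a central φ-invariant subgroup, and g ∈ G with image ḡ in G/C. The full preimage in G of the φ̄-twisted conjugacy class of ḡ (under G → G/C) is the disjoint union of the φ-twisted conjugacy classes of the elements g·cᵢ, where {c₁, ..., c_s} is a transversal of C with respect to L(C, φ_g) and s = [C : L(C, φ_g)]. -/
/-- the full preimage in `G` of the `φ̄`-twisted conjugacy class
of `ḡ` is the disjoint union of the `φ`-twisted conjugacy classes of the
elements `g * cᵢ`, where `(cᵢ)` is a transversal of `C` w.r.t. `L(C, φ_g)`. -/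
theorem stmt10 {G : Type*} [Group G] (φ : G ≃* G) (C : Subgroup G) [C.Normal]
    (hC : C ≤ Subgroup.center G) (hinv : ∀ c ∈ C, φ c ∈ C)
    (φb : (G ⧸ C) ≃* (G ⧸ C))
    (hφb : ∀ x : G, φb (QuotientGroup.mk x) = QuotientGroup.mk (φ x))
    (g : G) {ι : Type*} (c : ι → G) (hcC : ∀ i, c i ∈ C)
    -- `(cᵢ)` is a transversal of `C` w.r.t. `L(C, φ_g) = {e ∈ C | ∃ x, g⁻¹ * φ x * g = e * x}`:
    (htrans : ∀ d ∈ C, ∃! i : ι,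
        (c i)⁻¹ * d ∈ C ∧ ∃ x : G, g⁻¹ * φ x * g = ((c i)⁻¹ * d) * x) :
    (∀ f : G, TwistedConj φb (QuotientGroup.mk f) (QuotientGroup.mk g) ↔
        ∃ i : ι, TwistedConj φ f (g * c i)) ∧
    (∀ i j : ι, i ≠ j → ∀ f : G,
        TwistedConj φ f (g * c i) → ¬ TwistedConj φ f (g * c j)) := by
  have hsym : ∀ a b : G, TwistedConj φ a b → TwistedConj φ b a :=
    fun a b => (twistedSetoid φ).iseqv.symm
  have htrns : ∀ a b c' : G, TwistedConj φ a b → TwistedConj φ b c' → TwistedConj φ a c' :=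
    fun _ _ _ => (twistedSetoid φ).iseqv.trans
  have hcomm : ∀ d ∈ C, ∀ x : G, x * d = d * x := fun d hd x =>
    (Subgroup.mem_center_iff.mp (hC hd)) x
  -- key reformulation
  have key : ∀ (i : ι) (d : G), d ∈ C →
      (TwistedConj φ (g * c i) (g * d) ↔ ∃ x, g⁻¹ * φ x * g = ((c i)⁻¹ * d) * x) := by
    intro i d hd
    have hci := hcC i
    have hci' := C.inv_mem hci
    constructor
    · rintro ⟨x, hx⟩
      refine ⟨x, ?_⟩
      calc g⁻¹ * φ x * g = g⁻¹ * (φ x * (g * c i)) * (c i)⁻¹ := by group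
        _ = g⁻¹ * (g * d * x) * (c i)⁻¹ := by rw [hx]
        _ = d * (x * (c i)⁻¹) := by group
        _ = d * ((c i)⁻¹ * x) := by rw [hcomm _ hci' x]
        _ = (d * (c i)⁻¹) * x := by group
        _ = ((c i)⁻¹ * d) * x := by rw [← hcomm _ hci' d]
    · rintro ⟨x, hx⟩
      refine ⟨x, ?_⟩
      calc φ x * (g * c i) = g * (g⁻¹ * φ x * g) * c i := by group
        _ = g * (((c i)⁻¹ * d) * x) * c i := by rw [hx]
        _ = g * (c i)⁻¹ * d * (x * c i) := by group
        _ = g * (c i)⁻¹ * d * (c i * x) := by rw [hcomm _ hci x]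
        _ = g * (c i)⁻¹ * (d * c i) * x := by group
        _ = g * (c i)⁻¹ * (c i * d) * x := by rw [← hcomm _ hci d]
        _ = g * d * x := by group
  constructor
  · intro f
    constructor
    · rintro ⟨xq, hxq⟩
      obtain ⟨x, rfl⟩ := QuotientGroup.mk_surjective xq
      rw [hφb, ← QuotientGroup.mk_mul, ← QuotientGroup.mk_mul] at hxq
      have he : (φ x * f)⁻¹ * (g * x) ∈ C := (QuotientGroup.eq (s := C)).mp hxq
      set e : G := (φ x * f)⁻¹ * (g * x) with hedef
      have hd : e⁻¹ ∈ C := C.inv_mem he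
      have hfd : TwistedConj φ f (g * e⁻¹) := by
        refine ⟨x, ?_⟩
        have h1 : φ x * f = g * (x * e⁻¹) := by
          rw [hedef]; group
        rw [h1, hcomm _ hd x]; group
      obtain ⟨i, ⟨_, hx0⟩, _⟩ := htrans e⁻¹ hd
      exact ⟨i, htrns f (g * e⁻¹) (g * c i) hfd
        (hsym _ _ ((key i e⁻¹ hd).mpr hx0))⟩
    · rintro ⟨i, x, hx⟩
      refine ⟨QuotientGroup.mk x, ?_⟩
      rw [hφb, ← QuotientGroup.mk_mul, hx, ← QuotientGroup.mk_mul]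
      have : (QuotientGroup.mk (c i) : G ⧸ C) = 1 :=
        (QuotientGroup.eq_one_iff _).mpr (hcC i)
      calc (QuotientGroup.mk (g * c i * x) : G ⧸ C)
          = QuotientGroup.mk g * QuotientGroup.mk (c i) * QuotientGroup.mk x := by
            rw [← QuotientGroup.mk_mul, ← QuotientGroup.mk_mul]
        _ = QuotientGroup.mk (g * x) := by rw [this, mul_one, ← QuotientGroup.mk_mul]
  · intro i j hij f hfi hfj
    have hij' : TwistedConj φ (g * c i) (g * c j) :=
      htrns _ f _ (hsym _ _ hfi) hfj
    obtain ⟨k, _, hu⟩ := htrans (c j) (hcC j)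
    have hi : i = k := hu i ⟨C.mul_mem (C.inv_mem (hcC i)) (hcC j),
      (key i (c j) (hcC j)).mp hij'⟩
    have hj : j = k := hu j ⟨C.mul_mem (C.inv_mem (hcC j)) (hcC j),
      ⟨1, by simp⟩⟩
    exact hij (hi.trans hj.symm)
end

section
/- Let N be a finitely generated torsion-free nilpotent group with upper central series 1 = ζ₀N < ζ₁N < ... < ζ_kN = N, and let φ be an automorphism of N with induced automorphisms φ̄ᵢ on Aᵢ = ζ_{i+1}N / ζᵢN. If for some i the fixed subgroup Fix(φ̄ᵢ) ⊆ Aᵢ is nontrivial, then R(φ) = ∞. -/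
open Subgroup hiding upperCentralSeries mem_upperCentralSeries_succ_iff upperCentralSeries_zero upperCentralSeries_mono comap_upperCentralSeries lowerCentralSeries lowerCentralSeries_zero nilpotent_iff_lowerCentralSeries
open scoped commutatorElement
open scoped IsMulCommutative

section Isolation
variable {G : Type*} [Group G]

/-- If the commutator `x*y*x⁻¹*y⁻¹` is central, then `xⁿ*y*x⁻ⁿ*y⁻¹ = (x*y*x⁻¹*y⁻¹)^n`. -/
lemma pow_comm_of_center {x y : G} (h : x * y * x⁻¹ * y⁻¹ ∈ Subgroup.center G) :
    ∀ n : ℕ, x ^ n * y * (x ^ n)⁻¹ * y⁻¹ = (x * y * x⁻¹ * y⁻¹) ^ n := by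
  intro n
  induction n with
  | zero => simp
  | succ n ih =>
    have key : x ^ (n+1) * y * (x ^ (n+1))⁻¹ * y⁻¹
        = x * (x ^ n * y * (x ^ n)⁻¹ * y⁻¹) * x⁻¹ * (x * y * x⁻¹ * y⁻¹) := by
      group
    rw [key, ih]
    have hcx : (x * y * x⁻¹ * y⁻¹) ^ n * x = x * (x * y * x⁻¹ * y⁻¹) ^ n :=
      (Subgroup.mem_center_iff.mp (pow_mem h n) x).symm
    rw [← hcx, pow_succ]
    group

lemma mem_center_quot {j : ℕ} {x : G} (hx : x ∈ Subgroup.upperCentralSeries G (j+1)) :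
    (QuotientGroup.mk x : G ⧸ Subgroup.upperCentralSeries G j)
      ∈ Subgroup.center (G ⧸ Subgroup.upperCentralSeries G j) := by
  rw [Subgroup.mem_center_iff]
  intro q
  induction q using QuotientGroup.induction_on with
  | _ g =>
    have h1 : x * g⁻¹ * x⁻¹ * g⁻¹⁻¹ ∈ Subgroup.upperCentralSeries G j :=
      mem_upperCentralSeries_succ_iff.mp hx g⁻¹
    have h2 : (g * x)⁻¹ * (x * g) ∈ Subgroup.upperCentralSeries G j := by
      have := (inferInstance : (Subgroup.upperCentralSeries G j).Normal).conj_mem _ (inv_mem h1) x⁻¹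
      convert this using 1
      group
    have : (QuotientGroup.mk (g * x) : G ⧸ Subgroup.upperCentralSeries G j) = QuotientGroup.mk (x * g) :=
      QuotientGroup.eq.mpr h2
    simpa using this
end Isolation

section Iso2
variable {G : Type*} [Group G]

lemma factor_torsionfree (htf : ∀ g : G, g ≠ 1 → ¬IsOfFinOrder g) :
    ∀ (j : ℕ) (x : G) (n : ℕ), 0 < n → x ∈ Subgroup.upperCentralSeries G (j+1) →
      x ^ n ∈ Subgroup.upperCentralSeries G j → x ∈ Subgroup.upperCentralSeries G j := by
  intro j
  induction j with
  | zero =>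
    intro x n hn _ hxn
    rw [upperCentralSeries_zero, Subgroup.mem_bot] at *
    by_contra hx1
    exact htf x hx1 (isOfFinOrder_iff_pow_eq_one.mpr ⟨n, hn, hxn⟩)
  | succ j ih =>
    intro x n hn hx hxn
    rw [mem_upperCentralSeries_succ_iff]
    intro g
    set c := x * g * x⁻¹ * g⁻¹ with hc_def
    have hc1 : c ∈ Subgroup.upperCentralSeries G (j+1) := mem_upperCentralSeries_succ_iff.mp hx g
    refine ih c n hn hc1 ?_
    -- show c ^ n ∈ Subgroup.upperCentralSeries G j, working in the quotient
    rw [← QuotientGroup.eq_one_iff (N := Subgroup.upperCentralSeries G j) (c ^ n)]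
    set π : G →* G ⧸ Subgroup.upperCentralSeries G j := QuotientGroup.mk' _ with hπ
    have hcen : π c ∈ Subgroup.center (G ⧸ Subgroup.upperCentralSeries G j) := mem_center_quot hc1
    have hxc : π x * π g * (π x)⁻¹ * (π g)⁻¹ ∈ Subgroup.center _ := by
      have : π x * π g * (π x)⁻¹ * (π g)⁻¹ = π c := by
        simp [hc_def]
      rw [this]; exact hcen
    have hpow := pow_comm_of_center hxc n
    have hxnc : (π x) ^ n ∈ Subgroup.center _ := by
      have : (π x) ^ n = π (x ^ n) := by simp
      rw [this]
      exact mem_center_quot hxn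
    have hone : (π x) ^ n * π g * ((π x) ^ n)⁻¹ * (π g)⁻¹ = 1 := by
      rw [← Subgroup.mem_center_iff.mp hxnc (π g)]
      group
    show π (c ^ n) = 1
    have : π (c ^ n) = (π x * π g * (π x)⁻¹ * (π g)⁻¹) ^ n := by simp [hc_def]
    rw [this, ← hpow, hone]

lemma ucs_isolated [Group.IsNilpotent G] (htf : ∀ g : G, g ≠ 1 → ¬IsOfFinOrder g) (i : ℕ) (x : G) (n : ℕ)
    (hn : 0 < n) (hxn : x ^ n ∈ Subgroup.upperCentralSeries G i) : x ∈ Subgroup.upperCentralSeries G i := by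
  obtain ⟨k, hk⟩ := Group.IsNilpotent.nilpotent' (G := G)
  have key : ∀ d : ℕ, x ∈ Subgroup.upperCentralSeries G (i + d) → x ∈ Subgroup.upperCentralSeries G i := by
    intro d
    induction d with
    | zero => exact fun h => h
    | succ d ihd =>
      intro hx
      exact ihd (factor_torsionfree htf (i + d) x n hn hx
        (upperCentralSeries_mono G (Nat.le_add_right i d) hxn))
  refine key k ?_
  have : Subgroup.upperCentralSeries G k ≤ Subgroup.upperCentralSeries G (i + k) :=
    upperCentralSeries_mono G (Nat.le_add_left k i)
  exact this (hk ▸ Subgroup.mem_top x)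
end Iso2

open Subgroup hiding upperCentralSeries mem_upperCentralSeries_succ_iff upperCentralSeries_zero upperCentralSeries_mono comap_upperCentralSeries lowerCentralSeries lowerCentralSeries_zero nilpotent_iff_lowerCentralSeries

section FGinfra

/-- Subgroups of finitely generated commutative groups are finitely generated. -/
lemma comm_noetherian {H : Type*} [CommGroup H] (hfg : Group.FG H) (K : Subgroup H) : K.FG := by
  rw [Subgroup.fg_iff_add_fg]
  have hM : Module.Finite ℤ (Additive H) :=
    Module.Finite.iff_addGroup_fg.mpr (GroupFG.iff_add_fg.mp hfg)
  haveI : IsNoetherian ℤ (Additive H) := isNoetherian_of_isNoetherianRing_of_finite ℤ (Additive H)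
  have := IsNoetherian.noetherian (AddSubgroup.toIntSubmodule K.toAddSubgroup)
  rwa [Submodule.fg_iff_addSubgroup_fg, AddSubgroup.toIntSubmodule_toAddSubgroup] at this

/-- A group is finitely generated if it has a surjection onto a finitely generated group
with finitely generated kernel. -/
lemma fg_of_ker_of_quotient {G Q : Type*} [Group G] [Group Q] (f : G →* Q)
    (hsurj : Function.Surjective f) (hker : f.ker.FG) (hQ : Group.FG Q) : Group.FG G := by
  obtain ⟨Sq, hSq⟩ := hQ.out
  obtain ⟨S2, hS2⟩ := hker
  classical
  let S1 : Finset G := Sq.image (Function.surjInv hsurj)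
  refine ⟨⟨S1 ∪ S2, ?_⟩⟩
  set C := Subgroup.closure ((S1 ∪ S2 : Finset G) : Set G) with hC
  have hkerC : f.ker ≤ C := by
    rw [← hS2]
    apply Subgroup.closure_mono
    intro x hx
    simp only [Finset.coe_union]
    exact Set.mem_union_right _ hx
  have hmap : Subgroup.map f C = ⊤ := by
    rw [eq_top_iff, ← hSq, hC]
    rw [MonoidHom.map_closure]
    apply Subgroup.closure_mono
    intro q hq
    refine (Set.mem_image _ _ _).mpr ⟨Function.surjInv hsurj q, ?_, Function.surjInv_eq hsurj q⟩
    simp only [Finset.coe_union, S1]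
    exact Set.mem_union_left _ (by simpa using ⟨q, hq, rfl⟩)
  rw [eq_top_iff]
  intro g _
  have : f g ∈ Subgroup.map f C := hmap ▸ Subgroup.mem_top _
  obtain ⟨c, hc, hfc⟩ := this
  have : c⁻¹ * g ∈ f.ker := by
    rw [MonoidHom.mem_ker, map_mul, map_inv, hfc]
    group
  have := mul_mem hc (hkerC this)
  simpa using this

end FGinfra

section LCS
variable {G : Type*} [Group G]

lemma mk_mem_center_of_comm {M : Subgroup G} [M.Normal] {x : G}
    (h : ∀ g : G, x * g * x⁻¹ * g⁻¹ ∈ M) :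
    (QuotientGroup.mk x : G ⧸ M) ∈ Subgroup.center (G ⧸ M) := by
  rw [Subgroup.mem_center_iff]
  intro q
  induction q using QuotientGroup.induction_on with
  | _ g =>
    have h2 : (g * x)⁻¹ * (x * g) ∈ M := by
      have h1 := h g⁻¹
      have := (‹M.Normal›).conj_mem _ (inv_mem h1) x⁻¹
      convert this using 1
      group
    have : (QuotientGroup.mk (g * x) : G ⧸ M) = QuotientGroup.mk (x * g) :=
      QuotientGroup.eq.mpr h2
    simpa using this

lemma conj_central {Q : Type*} [Group Q] {z : Q}
    (hz : z ∈ Subgroup.center Q) (u : Q) : u * z * u⁻¹ = z := by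
  rw [Subgroup.mem_center_iff.mp hz u, mul_inv_cancel_right]

lemma conj_central' {Q : Type*} [Group Q] {z : Q}
    (hz : z ∈ Subgroup.center Q) (u : Q) : u⁻¹ * z * u = z := by
  have := conj_central hz u⁻¹
  rwa [inv_inv] at this

lemma commutator_central_mul_left {Q : Type*} [Group Q] {z w v : Q}
    (hz : z ∈ Subgroup.center Q) : ⁅z * w, v⁆ = ⁅w, v⁆ := by
  have h1 : ⁅z * w, v⁆ = z * ⁅w, v⁆ * z⁻¹ := by
    simp only [commutatorElement_def]
    have hzv : z * v = v * z := (Subgroup.mem_center_iff.mp hz v).symm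
    have : z * w * v * (z * w)⁻¹ * v⁻¹ = z * (w * v * w⁻¹) * z⁻¹ * v⁻¹ := by group
    rw [this]
    have h2 : z⁻¹ * v⁻¹ = v⁻¹ * z⁻¹ := by
      rw [← mul_inv_rev, ← mul_inv_rev, hzv]
    rw [mul_assoc (z * (w * v * w⁻¹)), h2, ← mul_assoc, ← mul_assoc]
    group
  rw [h1]
  have : z * ⁅w, v⁆ * z⁻¹ = ⁅w, v⁆ * z * z⁻¹ := by
    rw [Subgroup.mem_center_iff.mp hz ⁅w, v⁆]
  rw [this, mul_inv_cancel_right]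

lemma exists_lcs_fgmod {S : Finset G} (hS : Subgroup.closure (S : Set G) = ⊤) (n : ℕ) :
    ∃ T : Finset G, (T : Set G) ⊆ Subgroup.lowerCentralSeries (⊤ : Subgroup G) n ∧
      ∀ x ∈ Subgroup.lowerCentralSeries (⊤ : Subgroup G) n, ∃ t ∈ Subgroup.closure (T : Set G),
        x * t⁻¹ ∈ Subgroup.lowerCentralSeries (⊤ : Subgroup G) (n + 1) := by
  classical
  induction n with
  | zero =>
    exact ⟨S, by simp, fun x _ => ⟨x, by rw [hS]; trivial, by simp [Subgroup.one_mem]⟩⟩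
  | succ n ih =>
    obtain ⟨T, hTsub, hT⟩ := ih
    set T' : Finset G := (T ×ˢ S).image (fun p => ⁅p.1, p.2⁆) with hT'def
    have hT'sub : (T' : Set G) ⊆ (Subgroup.lowerCentralSeries (⊤ : Subgroup G) (n+1) : Set G) := by
      intro y hy
      simp only [hT'def, Finset.coe_image, Set.mem_image, Finset.mem_coe, Finset.mem_product]
        at hy
      obtain ⟨⟨t, s⟩, ⟨ht, _⟩, rfl⟩ := hy
      exact commutator_mem_commutator (hTsub ht) (Subgroup.mem_top _)
    refine ⟨T', hT'sub, ?_⟩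
    intro x hx
    set M := Subgroup.lowerCentralSeries (⊤ : Subgroup G) (n + 2) with hM
    set π : G →* G ⧸ M := QuotientGroup.mk' M with hπ
    have hπsurj : Function.Surjective π := QuotientGroup.mk'_surjective M
    -- the image of γ(n+1) is central in G ⧸ γ(n+2)
    have hZ : ∀ w ∈ Subgroup.lowerCentralSeries (⊤ : Subgroup G) (n+1), π w ∈ Subgroup.center (G ⧸ M) := by
      intro w hw
      exact mk_mem_center_of_comm (fun g => commutator_mem_commutator hw (Subgroup.mem_top g))
    have hbr : ∀ w ∈ Subgroup.lowerCentralSeries (⊤ : Subgroup G) n, ∀ v : G ⧸ M,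
        ⁅(π w : G ⧸ M), v⁆ ∈ Subgroup.center (G ⧸ M) := by
      intro w hw v
      obtain ⟨g, rfl⟩ := hπsurj v
      have : (⁅(π w : G ⧸ M), π g⁆ : G ⧸ M) = π ⁅w, g⁆ := (map_commutatorElement π w g).symm
      rw [this]
      exact hZ _ (commutator_mem_commutator hw (Subgroup.mem_top g))
    set C : Subgroup (G ⧸ M) := Subgroup.closure (π '' (T' : Set G)) with hC
    -- claim 1 : brackets of generators
    have claim1 : ∀ t ∈ T, ∀ v : G ⧸ M, ⁅(π t : G ⧸ M), v⁆ ∈ C := by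
      intro t ht v
      have hvtop : v ∈ Subgroup.closure (π '' (S : Set G)) := by
        rw [← MonoidHom.map_closure, hS, Subgroup.map_top_of_surjective π hπsurj]
        trivial
      induction hvtop using Subgroup.closure_induction with
      | mem v hv =>
        obtain ⟨s, hs, rfl⟩ := hv
        have : (⁅(π t : G ⧸ M), π s⁆ : G ⧸ M) = π ⁅t, s⁆ := (map_commutatorElement π t s).symm
        rw [this]
        apply Subgroup.subset_closure
        refine ⟨⁅t, s⁆, ?_, rfl⟩
        have : ⁅t, s⁆ ∈ T' := Finset.mem_image.mpr ⟨(t, s), Finset.mem_product.mpr ⟨ht, hs⟩, rfl⟩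
        exact Finset.mem_coe.mpr this
      | one =>
        rw [commutatorElement_one_right]
        exact Subgroup.one_mem C
      | mul v₁ v₂ hv₁ hv₂ ih₁ ih₂ =>
        have key : ⁅(π t : G ⧸ M), v₁ * v₂⁆ = ⁅(π t : G ⧸ M), v₁⁆ * (v₁ * ⁅(π t : G ⧸ M), v₂⁆ * v₁⁻¹) := by
          group
        rw [key]
        have hc2 : ⁅(π t : G ⧸ M), v₂⁆ ∈ Subgroup.center _ := hbr t (hTsub ht) v₂
        rw [conj_central hc2 v₁]
        exact mul_mem ih₁ ih₂
      | inv v hv ihv =>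
        have hc2 : ⁅(π t : G ⧸ M), v⁆ ∈ Subgroup.center _ := hbr t (hTsub ht) v
        have key : ⁅(π t : G ⧸ M), v⁻¹⁆ = v⁻¹ * ⁅(π t : G ⧸ M), v⁆⁻¹ * v := by group
        rw [key, conj_central' (inv_mem hc2) v]
        exact inv_mem ihv
    -- claim 2: all elements of closure (π '' T)
    have hTbar_le : Subgroup.closure (π '' (T : Set G)) ≤ Subgroup.map π (Subgroup.lowerCentralSeries (⊤ : Subgroup G) n) := by
      rw [Subgroup.closure_le]
      intro u hu
      obtain ⟨t, ht, rfl⟩ := hu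
      exact ⟨t, hTsub ht, rfl⟩
    have claim2 : ∀ u ∈ Subgroup.closure (π '' (T : Set G)), ∀ v : G ⧸ M, ⁅u, v⁆ ∈ C := by
      intro u hu
      induction hu using Subgroup.closure_induction with
      | mem u hu =>
        obtain ⟨t, ht, rfl⟩ := hu
        exact claim1 t ht
      | one =>
        intro v
        rw [commutatorElement_one_left]
        exact Subgroup.one_mem C
      | mul u₁ u₂ hu₁ hu₂ ih₁ ih₂ =>
        intro v
        obtain ⟨w₂, hw₂, rfl⟩ := hTbar_le hu₂
        have hc2 : ⁅(π w₂ : G ⧸ M), v⁆ ∈ Subgroup.center _ := hbr w₂ hw₂ v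
        have key : ⁅u₁ * (π w₂ : G ⧸ M), v⁆ = (u₁ * ⁅(π w₂ : G ⧸ M), v⁆ * u₁⁻¹) * ⁅u₁, v⁆ := by
          group
        rw [key, conj_central hc2 u₁]
        exact mul_mem (ih₂ v) (ih₁ v)
      | inv u hu ihu =>
        intro v
        obtain ⟨w, hw, rfl⟩ := hTbar_le hu
        have hc2 : ⁅(π w : G ⧸ M), v⁆ ∈ Subgroup.center _ := hbr w hw v
        have key : ⁅(π w : G ⧸ M)⁻¹, v⁆ = (π w : G ⧸ M)⁻¹ * ⁅(π w : G ⧸ M), v⁆⁻¹ * (π w : G ⧸ M) := by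
          group
        rw [key, conj_central' (inv_mem hc2) (π w)]
        exact inv_mem (ihu v)
    -- bridge : all brackets from map π (γ n)
    have bridge : ∀ u ∈ Subgroup.map π (Subgroup.lowerCentralSeries (⊤ : Subgroup G) n), ∀ v : G ⧸ M, ⁅u, v⁆ ∈ C := by
      rintro u ⟨w, hw, rfl⟩ v
      obtain ⟨t, htcl, hwt⟩ := hT w hw
      have hdecomp : (π w : G ⧸ M) = π (w * t⁻¹) * π t := by
        rw [← map_mul]
        congr 1
        group
      rw [hdecomp, commutator_central_mul_left (hZ _ hwt)]
      have : (π t : G ⧸ M) ∈ Subgroup.closure (π '' (T : Set G)) := by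
        rw [← MonoidHom.map_closure]
        exact ⟨t, htcl, rfl⟩
      exact claim2 _ this v
    -- conclude : image of γ(n+1) is contained in C
    have hfinal : Subgroup.map π (Subgroup.lowerCentralSeries (⊤ : Subgroup G) (n+1)) ≤ C := by
      have h1 : Subgroup.lowerCentralSeries (⊤ : Subgroup G) (n+1) = ⁅Subgroup.lowerCentralSeries (⊤ : Subgroup G) n, (⊤ : Subgroup G)⁆ := rfl
      rw [h1, Subgroup.map_commutator]
      rw [show Subgroup.map π ⊤ = ⊤ from by
        rw [← MonoidHom.range_eq_map, MonoidHom.range_eq_top]; exact hπsurj]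
      rw [Subgroup.commutator_le]
      intro g₁ hg₁ g₂ _
      exact bridge g₁ hg₁ g₂
    -- unpack
    have hxC : (π x : G ⧸ M) ∈ Subgroup.map π (Subgroup.closure (T' : Set G)) := by
      rw [MonoidHom.map_closure]
      exact hfinal ⟨x, hx, rfl⟩
    obtain ⟨t', ht', hteq⟩ := hxC
    refine ⟨t', ht', ?_⟩
    have hmem : x⁻¹ * t' ∈ M := by
      rw [← QuotientGroup.eq]
      exact hteq.symm
    have := (lowerCentralSeries_normal _ (n+2) : Subgroup.Normal (Subgroup.lowerCentralSeries (⊤ : Subgroup G) (n+2))).conj_mem _ (inv_mem hmem) x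
    convert this using 1
    group

end LCS

section Noeth
variable {G : Type*} [Group G]

lemma map_lcs_fg {S : Finset G} (hS : Subgroup.closure (S : Set G) = ⊤) (n : ℕ) :
    (Subgroup.map (QuotientGroup.mk' (Subgroup.lowerCentralSeries (⊤ : Subgroup G) (n+1)))
      (Subgroup.lowerCentralSeries (⊤ : Subgroup G) n)).FG := by
  obtain ⟨T, hTsub, hT⟩ := exists_lcs_fgmod hS n
  classical
  set π : G →* G ⧸ Subgroup.lowerCentralSeries (⊤ : Subgroup G) (n+1) := QuotientGroup.mk' _ with hπ
  refine ⟨T.image π, ?_⟩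
  have himg : ((T.image π : Finset _) : Set _) = π '' (T : Set G) := by
    exact Finset.coe_image
  rw [himg, ← MonoidHom.map_closure]
  apply le_antisymm
  · apply Subgroup.map_mono
    rw [Subgroup.closure_le]
    exact hTsub
  · rintro _ ⟨w, hw, rfl⟩
    obtain ⟨t, htcl, hwt⟩ := hT w hw
    have h1 : π (w * t⁻¹) = 1 := (QuotientGroup.eq_one_iff _).mpr hwt
    have h2 : π w = π t := by
      have : π w = π (w * t⁻¹) * π t := by rw [← map_mul]; congr 1; group
      rw [this, h1, one_mul]
    rw [h2]
    exact ⟨t, htcl, rfl⟩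

instance map_lcs_isComm (n : ℕ) :
    IsMulCommutative (Subgroup.map (QuotientGroup.mk' (Subgroup.lowerCentralSeries (⊤ : Subgroup G) (n+1)))
      (Subgroup.lowerCentralSeries (⊤ : Subgroup G) n)) := by
  constructor
  constructor
  rintro ⟨a, x, hx, rfl⟩ ⟨b, y, hy, rfl⟩
  apply Subtype.ext
  show QuotientGroup.mk' _ x * QuotientGroup.mk' _ y = QuotientGroup.mk' _ y * QuotientGroup.mk' _ x
  rw [← map_mul, ← map_mul]
  apply (QuotientGroup.eq (s := Subgroup.lowerCentralSeries (⊤ : Subgroup G) (n+1))).mpr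
  have : (x * y)⁻¹ * (y * x) = ⁅y⁻¹, x⁻¹⁆ := by
    simp only [commutatorElement_def]
    group
  rw [this]
  have : ⁅y⁻¹, x⁻¹⁆ ∈ ⁅(⊤ : Subgroup G), Subgroup.lowerCentralSeries (⊤ : Subgroup G) n⁆ :=
    commutator_mem_commutator (Subgroup.mem_top _) (inv_mem hx)
  rwa [Subgroup.commutator_comm] at this

theorem nilpotent_fg_noetherian [Group.IsNilpotent G] (hFG : Group.FG G) (H : Subgroup G) :
    H.FG := by
  obtain ⟨S, hS⟩ := hFG.out
  obtain ⟨c, hc⟩ := nilpotent_iff_lowerCentralSeries.mp ‹Group.IsNilpotent G›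
  -- downward induction principle
  have key : ∀ n : ℕ, (∀ K : Subgroup G, K ≤ Subgroup.lowerCentralSeries (⊤ : Subgroup G) (n+1) → K.FG) →
      ∀ K : Subgroup G, K ≤ Subgroup.lowerCentralSeries (⊤ : Subgroup G) n → K.FG := by
    intro n ihn K hK
    set M := Subgroup.lowerCentralSeries (⊤ : Subgroup G) (n+1) with hM
    set π : G →* G ⧸ M := QuotientGroup.mk' M with hπ
    set f : K →* G ⧸ M := π.comp K.subtype with hf
    -- the kernel of f is fg as a group
    have hker_eq : f.ker = (K ⊓ M).subgroupOf K := by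
      ext x
      rw [MonoidHom.mem_ker, Subgroup.mem_subgroupOf, Subgroup.mem_inf]
      have h1 : f x = 1 ↔ (x : G) ∈ M := QuotientGroup.eq_one_iff _
      rw [h1]
      simp [x.2]
    have hKM : (K ⊓ M).FG := ihn (K ⊓ M) inf_le_right
    have hker_fg : f.ker.FG := by
      rw [hker_eq]
      have h1 : Group.FG ↥(K ⊓ M) := (Group.fg_iff_subgroup_fg _).mpr hKM
      have e : ((K ⊓ M).subgroupOf K) ≃* ↥(K ⊓ M) := Subgroup.subgroupOfEquivOfLe inf_le_left
      have h2 : Group.FG ((K ⊓ M).subgroupOf K) :=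
        @Group.fg_of_surjective _ _ _ _ h1 e.symm.toMonoidHom e.symm.surjective
      exact (Group.fg_iff_subgroup_fg _).mp h2
    -- the range of f is fg
    have hrange_le : f.range ≤ Subgroup.map π (Subgroup.lowerCentralSeries (⊤ : Subgroup G) n) := by
      rintro _ ⟨x, rfl⟩
      exact ⟨x, hK x.2, rfl⟩
    have hbig_fg : (Subgroup.map π (Subgroup.lowerCentralSeries (⊤ : Subgroup G) n)).FG := map_lcs_fg hS n
    have hrange_fg : Group.FG f.range := by
      have h1 : Group.FG (Subgroup.map π (Subgroup.lowerCentralSeries (⊤ : Subgroup G) n)) :=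
        (Group.fg_iff_subgroup_fg _).mpr hbig_fg
      have h2 : (f.range.subgroupOf (Subgroup.map π (Subgroup.lowerCentralSeries (⊤ : Subgroup G) n))).FG :=
        comm_noetherian h1 _
      have e : (f.range.subgroupOf (Subgroup.map π (Subgroup.lowerCentralSeries (⊤ : Subgroup G) n))) ≃* f.range :=
        Subgroup.subgroupOfEquivOfLe hrange_le
      exact @Group.fg_of_surjective _ _ _ _ ((Group.fg_iff_subgroup_fg _).mpr h2)
        e.toMonoidHom e.surjective
    -- conclude via the quotient
    have hquot_fg : Group.FG (K ⧸ f.ker) :=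
      @Group.fg_of_surjective _ _ _ _ hrange_fg
        (QuotientGroup.quotientKerEquivRange f).symm.toMonoidHom
        (QuotientGroup.quotientKerEquivRange f).symm.surjective
    have : Group.FG K := by
      refine fg_of_ker_of_quotient (QuotientGroup.mk' f.ker) (QuotientGroup.mk'_surjective _) ?_
        hquot_fg
      rw [QuotientGroup.ker_mk']
      exact hker_fg
    exact (Group.fg_iff_subgroup_fg _).mp this
  have main : ∀ j : ℕ, ∀ K : Subgroup G, K ≤ Subgroup.lowerCentralSeries (⊤ : Subgroup G) (c - j) → K.FG := by
    intro j
    induction j with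
    | zero =>
      intro K hK
      rw [Nat.sub_zero, hc, le_bot_iff] at hK
      exact hK ▸ ⟨∅, by simp⟩
    | succ j ihj =>
      intro K hK
      by_cases hj : c ≤ j
      · have h0 : c - (j+1) = 0 := by omega
        have h1 : c - j = 0 := by omega
        exact ihj K (by rwa [h1, ← h0])
      · have h1 : c - j = (c - (j+1)) + 1 := by omega
        exact key (c - (j+1)) (fun K' hK' => ihj K' (h1 ▸ hK')) K hK
  have := main c H (by rw [Nat.sub_self, lowerCentralSeries_zero]; exact le_top)
  exact this

end Noeth

/-- Key abelian lemma: if `A` is a f.g. torsion-free commutative group, `χ : A →* A`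
has a nontrivial kernel element, then `A ⧸ range χ` is infinite. -/
lemma infinite_coker {A : Type*} [CommGroup A] (hfg : Group.FG A)
    (htf : ∀ (x : A) (n : ℕ), 0 < n → x ^ n = 1 → x = 1)
    (χ : A →* A) (a : A) (ha : a ≠ 1) (hχa : χ a = 1) :
    Infinite (A ⧸ χ.range) := by
  rw [← not_finite_iff_infinite]
  intro hfin
  classical
  -- move to ℤ-modules
  set M := Additive A
  haveI hMfin : Module.Finite ℤ M :=
    Module.Finite.iff_addGroup_fg.mpr (GroupFG.iff_add_fg.mp hfg)
  haveI : NoZeroSMulDivisors ℤ M := by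
    constructor
    intro c x hcx
    by_contra hcon
    push_neg at hcon
    obtain ⟨hc, hx⟩ := hcon
    have hzpow : (Additive.toMul x) ^ c = 1 := by
      have := congrArg Additive.toMul hcx
      rw [toMul_zsmul] at this
      exact this
    have hnat : (Additive.toMul x) ^ c.natAbs = 1 := by
      rcases Int.natAbs_eq c with h | h
      · rw [h] at hzpow
        simpa [zpow_natCast] using hzpow
      · rw [h] at hzpow
        simp only [zpow_neg, zpow_natCast, inv_eq_one] at hzpow
        exact hzpow
    have : Additive.toMul x = 1 :=
      htf _ c.natAbs (Int.natAbs_pos.mpr hc) hnat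
    exact hx this
  haveI : Module.Free ℤ M := Module.free_of_finite_type_torsion_free'
  set f : M →ₗ[ℤ] M := (MonoidHom.toAdditive χ).toIntLinearMap with hfdef
  set ι := Module.Free.ChooseBasisIndex ℤ M
  set b : Module.Basis ι ℤ M := Module.Free.chooseBasis ℤ M
  -- a gives a nonzero kernel element
  set a' : M := Additive.ofMul a with ha'def
  have ha' : a' ≠ 0 := by
    intro h
    exact ha (congrArg Additive.toMul h)
  have hfa' : f a' = 0 := by
    show MonoidHom.toAdditive χ (Additive.ofMul a) = 0
    simp only [MonoidHom.toAdditive_apply_apply]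
    rw [show Additive.toMul (Additive.ofMul a) = a from rfl, hχa]
    rfl
  have hne : Nonempty ι := by
    by_contra hempty
    haveI : IsEmpty ι := not_nonempty_iff.mp hempty
    apply ha'
    have h0 : b.repr a' = b.repr 0 := Subsingleton.elim _ _
    exact b.repr.injective h0
  -- det of f is zero
  set C : Matrix ι ι ℤ := LinearMap.toMatrix b b f with hC
  have hdet : C.det = 0 := by
    rw [← Matrix.exists_mulVec_eq_zero_iff]
    refine ⟨b.repr a', ?_, ?_⟩
    · simpa using fun h => ha' (b.repr.map_eq_zero_iff.mp h)
    · rw [LinearMap.toMatrix_mulVec_repr b b f a', hfa', map_zero]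
      rfl
  -- m • x ∈ range f for all x
  haveI : Subgroup.Normal χ.range := Subgroup.normal_of_comm _
  set m := Nat.card (A ⧸ χ.range) with hm
  have hmpos : 0 < m := Nat.card_pos
  have hmrange : ∀ x : M, (m : ℤ) • x ∈ LinearMap.range f := by
    intro x
    have h1 : (QuotientGroup.mk (Additive.toMul x) : A ⧸ χ.range) ^ m = 1 := by
      rw [hm]
      exact pow_card_eq_one'
    have h2 : (Additive.toMul x) ^ m ∈ χ.range := by
      rwa [← QuotientGroup.eq_one_iff, QuotientGroup.mk_pow]
    obtain ⟨y, hy⟩ := h2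
    refine ⟨Additive.ofMul y, ?_⟩
    show MonoidHom.toAdditive χ (Additive.ofMul y) = (m : ℤ) • x
    have : Additive.ofMul (χ y) = Additive.ofMul ((Additive.toMul x) ^ m) := by rw [hy]
    simpa [natCast_zsmul] using this
  -- construct right inverse up to multiplication by m
  have hws : ∀ i : ι, ∃ w : M, f w = (m : ℤ) • b i := fun i => hmrange (b i)
  choose w hw using hws
  set g : M →ₗ[ℤ] M := b.constr ℤ w with hg
  have hcomp : f ∘ₗ g = (m : ℤ) • LinearMap.id := by
    apply b.ext
    intro i
    simp [hg, Module.Basis.constr_basis, hw i]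
  set D : Matrix ι ι ℤ := LinearMap.toMatrix b b g with hD
  have hmat : C * D = (m : ℤ) • (1 : Matrix ι ι ℤ) := by
    rw [hC, hD, ← LinearMap.toMatrix_comp b b b f g, hcomp]
    rw [map_smul]
    congr 1
    exact LinearMap.toMatrix_id b
  have hdetprod : C.det * D.det = ((m : ℤ)) ^ (Fintype.card ι) := by
    rw [← Matrix.det_mul, hmat, Matrix.det_smul, Matrix.det_one, mul_one]
  rw [hdet, zero_mul] at hdetprod
  have : (m : ℤ) ^ Fintype.card ι ≠ 0 := by
    apply pow_ne_zero
    exact_mod_cast Nat.pos_iff_ne_zero.mp hmpos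
  exact this hdetprod.symm

section Main
variable {N : Type*} [Group N]

theorem main_thm [Group.IsNilpotent N]
    (hFG : Group.FG N) (htf : ∀ g : N, g ≠ 1 → ¬IsOfFinOrder g)
    (φ : N ≃* N) (i : ℕ) (a : N)
    (ha1 : a ∈ Subgroup.upperCentralSeries N (i + 1))
    (ha2 : a ∉ Subgroup.upperCentralSeries N i)
    (hfix : φ a * a⁻¹ ∈ Subgroup.upperCentralSeries N i) :
    ∃ x : ℕ → N, ∀ t s, TwistedConj φ (x t) (x s) → t = s := by
  classical
  obtain ⟨k, hk⟩ := Group.IsNilpotent.nilpotent' (G := N)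
  have hinv : ∀ (n : ℕ) (x : N), φ x ∈ Subgroup.upperCentralSeries N n ↔ x ∈ Subgroup.upperCentralSeries N n := by
    intro n x
    constructor
    · intro h
      have hc := comap_upperCentralSeries φ n
      rw [← hc]
      exact h
    · intro h
      have hc := comap_upperCentralSeries φ n
      rw [← hc] at h
      exact h
  set P : ℕ → Prop := fun m => ∃ b : N, b ∈ Subgroup.upperCentralSeries N (m+1) ∧
    b ∉ Subgroup.upperCentralSeries N m ∧ φ b * b⁻¹ ∈ Subgroup.upperCentralSeries N m with hP
  have hPi : P i := ⟨a, ha1, ha2, hfix⟩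
  have hik : i ≤ k := by
    by_contra hcon
    push_neg at hcon
    exact ha2 (upperCentralSeries_mono N (le_of_lt hcon) (hk ▸ Subgroup.mem_top a))
  set j : ℕ := Nat.findGreatest P k with hj
  have hPj : P j := Nat.findGreatest_spec hik hPi
  obtain ⟨b, hb1, hb2, hbfix⟩ := hPj
  have hgreatest : ∀ m, j < m → m ≤ k → ¬ P m := fun m h1 h2 =>
    Nat.findGreatest_is_greatest h1 h2
  -- maximality consequence
  have hpush : ∀ x : N, φ x * x⁻¹ ∈ Subgroup.upperCentralSeries N (j+1) →
      x ∈ Subgroup.upperCentralSeries N (j+1) := by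
    intro x hx
    have hxk : x ∈ Subgroup.upperCentralSeries N k := hk ▸ Subgroup.mem_top x
    have hex : ∃ m, x ∈ Subgroup.upperCentralSeries N m := ⟨k, hxk⟩
    rcases Nat.lt_or_ge (Nat.find hex) (j+2) with hlt | hge
    · exact upperCentralSeries_mono N (by omega) (Nat.find_spec hex)
    · exfalso
      have h1 : Nat.find hex - 1 + 1 = Nat.find hex := by omega
      have hxm : x ∈ Subgroup.upperCentralSeries N (Nat.find hex - 1 + 1) := by
        rw [h1]; exact Nat.find_spec hex
      have hxm' : x ∉ Subgroup.upperCentralSeries N (Nat.find hex - 1) := Nat.find_min hex (by omega)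
      have hfindk : Nat.find hex ≤ k := Nat.find_le hxk
      exact hgreatest (Nat.find hex - 1) (by omega) (by omega)
        ⟨x, hxm, hxm', upperCentralSeries_mono N (by omega) hx⟩
  -- quotient setup
  set Z : Subgroup N := Subgroup.upperCentralSeries N j with hZdef
  set π : N →* N ⧸ Z := QuotientGroup.mk' Z with hπ
  have hle : Z ≤ Z.comap φ.toMonoidHom := by
    intro z hz
    rw [Subgroup.mem_comap]
    exact (hinv j z).mpr hz
  set ψ : N ⧸ Z →* N ⧸ Z := QuotientGroup.map Z Z φ.toMonoidHom hle with hψ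
  have hψπ : ∀ x : N, ψ (π x) = π (φ x) := by
    intro x
    rw [hψ, hπ]
    exact QuotientGroup.map_mk' Z Z φ.toMonoidHom hle x
  set A : Subgroup (N ⧸ Z) := Subgroup.map π (Subgroup.upperCentralSeries N (j+1)) with hA
  have hAcentral : ∀ u ∈ A, u ∈ Subgroup.center (N ⧸ Z) := by
    rintro _ ⟨x, hx, rfl⟩
    exact mk_mem_center_of_comm (fun g => mem_upperCentralSeries_succ_iff.mp hx g)
  haveI hAcomm : IsMulCommutative A := by
    constructor
    constructor
    intro u v
    apply Subtype.ext
    exact Subgroup.mem_center_iff.mp (hAcentral ↑v v.2) ↑u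
  have hA_fg : Group.FG A := by
    rw [Group.fg_iff_subgroup_fg]
    obtain ⟨T, hT⟩ := nilpotent_fg_noetherian hFG (Subgroup.upperCentralSeries N (j+1))
    refine ⟨T.image π, ?_⟩
    have himg : ((T.image π : Finset _) : Set _) = π '' (T : Set N) := by
      simp [Finset.coe_image]
    rw [himg, ← MonoidHom.map_closure, hT]
  have htfA : ∀ (x : A) (n : ℕ), 0 < n → x ^ n = 1 → x = 1 := by
    rintro ⟨u, x, hx, rfl⟩ n hn hxn
    apply Subtype.ext
    show π x = 1
    have hco : (π x) ^ n = 1 := by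
      have := congrArg (Subtype.val) hxn
      simpa using this
    have : π (x ^ n) = 1 := by rw [map_pow]; exact hco
    have hmem : x ^ n ∈ Z := (QuotientGroup.eq_one_iff _).mp this
    have : x ∈ Z := ucs_isolated htf j x n hn hmem
    exact (QuotientGroup.eq_one_iff _).mpr this
  have hψA : ∀ u : (N ⧸ Z), u ∈ A → ψ u ∈ A := by
    rintro _ ⟨x, hx, rfl⟩
    rw [hψπ]
    exact ⟨φ x, (hinv (j+1) x).mpr hx, rfl⟩
  set χ : A →* A :=
    { toFun := fun u => ⟨ψ ↑u * (↑u)⁻¹, mul_mem (hψA ↑u u.2) (inv_mem u.2)⟩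
      map_one' := by
        apply Subtype.ext
        simp
      map_mul' := by
        intro u v
        apply Subtype.ext
        show ψ ((u : N ⧸ Z) * (v : N ⧸ Z)) * ((u : N ⧸ Z) * (v : N ⧸ Z))⁻¹ = (ψ ↑u * (↑u)⁻¹) * (ψ ↑v * (↑v)⁻¹)
        rw [map_mul, mul_inv_rev]
        have hz : ((↑u : N ⧸ Z))⁻¹ ∈ Subgroup.center (N ⧸ Z) := inv_mem (hAcentral _ u.2)
        have hswap : ψ ↑v * (↑v)⁻¹ * (↑u)⁻¹ = (↑u)⁻¹ * (ψ ↑v * (↑v)⁻¹) :=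
          Subgroup.mem_center_iff.mp hz _
        calc ψ ↑u * ψ ↑v * ((↑v)⁻¹ * (↑u)⁻¹)
            = ψ ↑u * (ψ ↑v * (↑v)⁻¹ * (↑u)⁻¹) := by group
          _ = ψ ↑u * ((↑u)⁻¹ * (ψ ↑v * (↑v)⁻¹)) := by rw [hswap]
          _ = ψ ↑u * (↑u)⁻¹ * (ψ ↑v * (↑v)⁻¹) := by group } with hχ
  set abar : A := ⟨π b, ⟨b, hb1, rfl⟩⟩ with habar
  have habar_ne : abar ≠ 1 := by
    intro hcon
    apply hb2
    have : π b = 1 := congrArg Subtype.val hcon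
    rw [hπ] at this
    exact (QuotientGroup.eq_one_iff _).mp this
  have hχabar : χ abar = 1 := by
    apply Subtype.ext
    show ψ (π b) * (π b)⁻¹ = 1
    rw [hψπ, ← map_inv, ← map_mul]
    exact (QuotientGroup.eq_one_iff _).mpr hbfix
  haveI hinf : Infinite (A ⧸ χ.range) := infinite_coker hA_fg htfA χ abar habar_ne hχabar
  haveI : Subgroup.Normal χ.range := Subgroup.normal_of_comm _
  -- choose representatives
  set e : ℕ ↪ A ⧸ χ.range := Infinite.natEmbedding _ with he
  have hq : ∀ t : ℕ, ∃ x : N, x ∈ Subgroup.upperCentralSeries N (j+1) ∧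
      π x = ((e t).out : N ⧸ Z) := by
    intro t
    obtain ⟨x, hx, hxe⟩ := (e t).out.2
    exact ⟨x, hx, hxe⟩
  choose x hx1 hx2 using hq
  refine ⟨x, ?_⟩
  intro t s hconj
  obtain ⟨y, hy⟩ := hconj
  -- Step 1 : y ∈ ζ_{j+1}
  have hyid : φ y * y⁻¹ = (x s * (x t)⁻¹) * (x t * y * (x t)⁻¹ * y⁻¹) := by
    have : φ y = x s * y * (x t)⁻¹ := by
      rw [← hy]; group
    rw [this]; group
  have hymem : y ∈ Subgroup.upperCentralSeries N (j+1) := by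
    apply hpush
    rw [hyid]
    exact mul_mem (mul_mem (hx1 s) (inv_mem (hx1 t)))
      (upperCentralSeries_mono N (Nat.le_succ j) (mem_upperCentralSeries_succ_iff.mp (hx1 t) y))
  -- Step 2 : project to A
  set u : A := ⟨π y, ⟨y, hymem, rfl⟩⟩ with hu
  have hproj : ψ (π y) * π (x t) = π (x s) * π y := by
    rw [hψπ, ← map_mul, ← map_mul, hy]
  have hcent : (π (x t))⁻¹ ∈ Subgroup.center (N ⧸ Z) :=
    inv_mem (hAcentral _ ⟨x t, hx1 t, rfl⟩)
  have hval : ψ (π y) * (π y)⁻¹ = π (x s) * (π (x t))⁻¹ := by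
    have h1 : ψ (π y) = π (x s) * π y * (π (x t))⁻¹ := by
      rw [← hproj]; group
    rw [h1]
    have h2 : π y * (π (x t))⁻¹ = (π (x t))⁻¹ * π y :=
      Subgroup.mem_center_iff.mp hcent (π y)
    calc π (x s) * π y * (π (x t))⁻¹ * (π y)⁻¹
        = π (x s) * (π y * (π (x t))⁻¹) * (π y)⁻¹ := by group
      _ = π (x s) * ((π (x t))⁻¹ * π y) * (π y)⁻¹ := by rw [h2]
      _ = π (x s) * (π (x t))⁻¹ := by group
  -- in A
  have hrange : ((e s).out)⁻¹ * (e t).out ∈ χ.range := by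
    have hAval : χ u = ⟨π (x s) * (π (x t))⁻¹,
        mul_mem ⟨x s, hx1 s, rfl⟩ (inv_mem ⟨x t, hx1 t, rfl⟩)⟩ := by
      apply Subtype.ext
      show ψ (π y) * (π y)⁻¹ = π (x s) * (π (x t))⁻¹
      exact hval
    have heq : ((e s).out : A) * ((e t).out : A)⁻¹
        = (⟨π (x s) * (π (x t))⁻¹, mul_mem ⟨x s, hx1 s, rfl⟩ (inv_mem ⟨x t, hx1 t, rfl⟩)⟩ : A) := by
      apply Subtype.ext
      show ((e s).out : N ⧸ Z) * ((e t).out : N ⧸ Z)⁻¹ = π (x s) * (π (x t))⁻¹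
      rw [← hx2 s, ← hx2 t]
    have : ((e s).out : A) * ((e t).out : A)⁻¹ ∈ χ.range := by
      rw [heq, ← hAval]; exact ⟨u, rfl⟩
    have := inv_mem this
    rw [mul_inv_rev, inv_inv] at this
    rw [mul_comm] at this
    exact this
  have : (e s) = (e t) := by
    rw [← QuotientGroup.out_eq' (e s), ← QuotientGroup.out_eq' (e t)]
    exact (QuotientGroup.eq).mpr hrange
  exact (e.injective this).symm

end Main


/-- `N` finitely generated torsion-free nilpotent, `φ` an
automorphism; if the automorphism induced on some upper central factor
`Aᵢ = ζ_{i+1}N ⧸ ζᵢN` has a nontrivial fixed point (i.e. there is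
`a ∈ ζ_{i+1}N \\ ζᵢN` with `φ a * a⁻¹ ∈ ζᵢN`), then `R(φ) = ∞`. -/
theorem stmt15 {N : Type*} [Group N] [Group.IsNilpotent N]
    (hFG : Group.FG N) (htf : ∀ g : N, g ≠ 1 → ¬IsOfFinOrder g)
    (φ : N ≃* N) (i : ℕ) (a : N)
    (ha1 : a ∈ upperCentralSeries N (i + 1))
    (ha2 : a ∉ upperCentralSeries N i)
    (hfix : φ a * a⁻¹ ∈ upperCentralSeries N i) :
    Infinite (Quotient (twistedSetoid φ)) := by
  obtain ⟨x, hx⟩ := main_thm hFG htf φ i a ha1 ha2 hfix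
  refine Infinite.of_injective (fun t => Quotient.mk (twistedSetoid φ) (x t)) ?_
  intro t s h
  exact hx t s (Quotient.exact h)
end
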